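/- arXiv:1602.03675 — 2 statements merged into one kernel-verified Lean document; each statement's English description precedes it below -/
import Mathlib

section
/- There is an absolute constant C such that for all Schwartz functions f, g on ℝ and all λ > 0, |{ x ∈ ℝ : M_Lac(f,g)(x) > λ }| ≤ C · λ^{-1} · ‖f‖_{L²(ℝ)} ‖g‖_{L²(ℝ)}. In other words, the bilinear lacunary maximal operator M_Lac maps L²(ℝ) × L²(ℝ) to L^{1,∞}(ℝ). -/
open MeasureTheory Set Real
open scoped ENNReal NNReal

/-- The closed rectangle in `ℝ²` with given center, whose sides of length `a`
point in direction `(cos θ, sin θ)` and whose sides of length `b` point in the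
orthogonal direction `(-sin θ, cos θ)`. -/
def rect (center : ℝ × ℝ) (θ a b : ℝ) : Set (ℝ × ℝ) :=
  {p | ∃ s t : ℝ, |s| ≤ a / 2 ∧ |t| ≤ b / 2 ∧
    p = (center.1 + s * Real.cos θ - t * Real.sin θ,
         center.2 + s * Real.sin θ + t * Real.cos θ)}

/-- Average of a nonnegative function over a set in `ℝ²`. -/
noncomputable def avgOn (R : Set (ℝ × ℝ)) (F : ℝ × ℝ → ℝ≥0∞) : ℝ≥0∞ :=
  (∫⁻ p in R, F p) / volume R

/-- The bilinear lacunary maximal operator: the supremum, over all rectangles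
(of side lengths `a × b`, `a ≥ b > 0`) centered at `(x, x)` whose longest side
makes an angle `2^{-j}` (for some `j : ℕ`) with the diagonal
`D = {(t, t) : t ∈ ℝ}` (whose direction has angle `π/4`), of the average of
`|f(y) g(z)|` over the rectangle. -/
noncomputable def lacMax (f g : ℝ → ℂ) (x : ℝ) : ℝ≥0∞ :=
  ⨆ (j : ℕ) (θ : ℝ)
    (_ : θ = π / 4 + (2 : ℝ) ^ (-(j : ℝ)) ∨ θ = π / 4 - (2 : ℝ) ^ (-(j : ℝ)))
    (a : ℝ) (b : ℝ) (_ : 0 < b) (_ : b ≤ a),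
    avgOn (rect (x, x) θ a b) (fun p => (‖f p.1 * g p.2‖₊ : ℝ≥0∞))


lemma mem_rect_iff {x θ a b : ℝ} {p : ℝ × ℝ} :
    p ∈ rect (x, x) θ a b ↔
      |(p.1 - x) * Real.cos θ + (p.2 - x) * Real.sin θ| ≤ a / 2 ∧
      |(x - p.1) * Real.sin θ + (p.2 - x) * Real.cos θ| ≤ b / 2 := by
  have pyth := Real.sin_sq_add_cos_sq θ
  simp only [rect, mem_setOf_eq]
  constructor
  · rintro ⟨s, t, hs, ht, hp⟩
    rw [Prod.ext_iff] at hp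
    obtain ⟨h1, h2⟩ := hp
    simp only at h1 h2
    constructor
    · have e : (p.1 - x) * Real.cos θ + (p.2 - x) * Real.sin θ = s := by
        rw [h1, h2]; linear_combination s * pyth
      rwa [e]
    · have e : (x - p.1) * Real.sin θ + (p.2 - x) * Real.cos θ = t := by
        rw [h1, h2]; linear_combination t * pyth
      rwa [e]
  · rintro ⟨h1, h2⟩
    refine ⟨(p.1 - x) * Real.cos θ + (p.2 - x) * Real.sin θ,
      (x - p.1) * Real.sin θ + (p.2 - x) * Real.cos θ, h1, h2, ?_⟩
    rw [Prod.ext_iff]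
    constructor
    · simp only; linear_combination (x - p.1) * pyth
    · simp only; linear_combination (x - p.2) * pyth


lemma measurableSet_rect {x θ a b : ℝ} : MeasurableSet (rect (x, x) θ a b) := by
  have : rect (x, x) θ a b =
      {p : ℝ × ℝ | |(p.1 - x) * Real.cos θ + (p.2 - x) * Real.sin θ| ≤ a / 2} ∩
      {p : ℝ × ℝ | |(x - p.1) * Real.sin θ + (p.2 - x) * Real.cos θ| ≤ b / 2} := by
    ext p; exact mem_rect_iff
  rw [this]
  apply MeasurableSet.inter
  · exact measurableSet_le (by fun_prop) measurable_const
  · exact measurableSet_le (by fun_prop) measurable_const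


lemma rect_fst_mem {x θ a b : ℝ} (hb : 0 ≤ b) (hab : b ≤ a) {p : ℝ × ℝ}
    (hp : p ∈ rect (x, x) θ a b) : p.1 ∈ Icc (x - a) (x + a) := by
  obtain ⟨h1, h2⟩ := mem_rect_iff.1 hp
  have pyth := Real.sin_sq_add_cos_sq θ
  have hc := Real.abs_cos_le_one θ
  have hs := Real.abs_sin_le_one θ
  set S := (p.1 - x) * Real.cos θ + (p.2 - x) * Real.sin θ with hS
  set T := (x - p.1) * Real.sin θ + (p.2 - x) * Real.cos θ with hT
  have key : p.1 - x = S * Real.cos θ - T * Real.sin θ := by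
    rw [hS, hT]; linear_combination (x - p.1) * pyth
  have : |p.1 - x| ≤ a := by
    calc |p.1 - x| = |S * Real.cos θ - T * Real.sin θ| := by rw [key]
    _ ≤ |S * Real.cos θ| + |T * Real.sin θ| := abs_sub _ _
    _ = |S| * |Real.cos θ| + |T| * |Real.sin θ| := by rw [abs_mul, abs_mul]
    _ ≤ (a/2) * 1 + (b/2) * 1 := by
        apply add_le_add <;> apply mul_le_mul (by assumption) (by assumption)
          (abs_nonneg _) (by linarith)
    _ ≤ a := by linarith
  rw [abs_le] at this
  exact ⟨by linarith [this.1], by linarith [this.2]⟩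


lemma rect_snd_mem {x θ a b : ℝ} (hb : 0 ≤ b) (hab : b ≤ a) {p : ℝ × ℝ}
    (hp : p ∈ rect (x, x) θ a b) : p.2 ∈ Icc (x - a) (x + a) := by
  obtain ⟨h1, h2⟩ := mem_rect_iff.1 hp
  have pyth := Real.sin_sq_add_cos_sq θ
  have hc := Real.abs_cos_le_one θ
  have hs := Real.abs_sin_le_one θ
  set S := (p.1 - x) * Real.cos θ + (p.2 - x) * Real.sin θ with hS
  set T := (x - p.1) * Real.sin θ + (p.2 - x) * Real.cos θ with hT
  have key : p.2 - x = S * Real.sin θ + T * Real.cos θ := by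
    rw [hS, hT]; linear_combination (x - p.2) * pyth
  have : |p.2 - x| ≤ a := by
    calc |p.2 - x| = |S * Real.sin θ + T * Real.cos θ| := by rw [key]
    _ ≤ |S * Real.sin θ| + |T * Real.cos θ| := abs_add_le _ _
    _ = |S| * |Real.sin θ| + |T| * |Real.cos θ| := by rw [abs_mul, abs_mul]
    _ ≤ (a/2) * 1 + (b/2) * 1 := by
        apply add_le_add <;> apply mul_le_mul (by assumption) (by assumption)
          (abs_nonneg _) (by linarith)
    _ ≤ a := by linarith
  rw [abs_le] at this
  exact ⟨by linarith [this.1], by linarith [this.2]⟩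



lemma volume_abs_affine_le {A c b : ℝ} (hb : 0 ≤ b) (hc : c ≠ 0) :
    volume {z : ℝ | |A + z * c| ≤ b / 2} ≤ ENNReal.ofReal (b / |c|) := by
  have hset : {z : ℝ | |A + z * c| ≤ b / 2}
      = (fun z => z * c) ⁻¹' ((fun w => A + w) ⁻¹' (Icc (-(b/2)) (b/2))) := by
    ext z
    simp only [mem_setOf_eq, mem_preimage, mem_Icc, abs_le]
  rw [hset, Set.preimage_const_add_Icc]
  rcases hc.lt_or_gt with h | h
  · rw [Set.preimage_mul_const_Icc_of_neg _ _ h, Real.volume_Icc, abs_of_neg h]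
    apply le_of_eq; congr 1
    rw [div_sub_div_same, show -(b / 2) - A - (b / 2 - A) = -b by ring, neg_div, div_neg]
  · rw [Set.preimage_mul_const_Icc₀ _ _ h, Real.volume_Icc, abs_of_pos h]
    apply le_of_eq; congr 1
    rw [div_sub_div_same, show b / 2 - A - (-(b / 2) - A) = b by ring]


lemma rect_slice_snd_le {x θ a b : ℝ} (hb : 0 ≤ b) (hc : Real.cos θ ≠ 0) (y : ℝ) :
    volume {z : ℝ | (y, z) ∈ rect (x, x) θ a b} ≤ ENNReal.ofReal (b / |Real.cos θ|) := by
  have hsub : {z : ℝ | (y, z) ∈ rect (x, x) θ a b}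
      ⊆ {z : ℝ | |((x - y) * Real.sin θ - x * Real.cos θ) + z * Real.cos θ| ≤ b / 2} := by
    intro z hz
    have h2 := (mem_rect_iff.1 hz).2
    simp only [mem_setOf_eq]
    have e : ((x - y) * Real.sin θ - x * Real.cos θ) + z * Real.cos θ
        = (x - y) * Real.sin θ + (z - x) * Real.cos θ := by ring
    rw [e]; exact h2
  exact le_trans (measure_mono hsub) (volume_abs_affine_le hb hc)


lemma rect_slice_fst_le {x θ a b : ℝ} (hb : 0 ≤ b) (hs : Real.sin θ ≠ 0) (z : ℝ) :
    volume {y : ℝ | (y, z) ∈ rect (x, x) θ a b} ≤ ENNReal.ofReal (b / |Real.sin θ|) := by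
  have hs' : -Real.sin θ ≠ 0 := neg_ne_zero.2 hs
  have hsub : {y : ℝ | (y, z) ∈ rect (x, x) θ a b}
      ⊆ {y : ℝ | |(x * Real.sin θ + (z - x) * Real.cos θ) + y * (-Real.sin θ)| ≤ b / 2} := by
    intro y hy
    have h2 := (mem_rect_iff.1 hy).2
    simp only [mem_setOf_eq]
    have e : (x * Real.sin θ + (z - x) * Real.cos θ) + y * (-Real.sin θ)
        = (x - y) * Real.sin θ + (z - x) * Real.cos θ := by ring
    rw [e]; exact h2
  refine le_trans (measure_mono hsub) (le_trans (volume_abs_affine_le hb hs') (le_of_eq ?_))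
  rw [abs_neg]


lemma volume_rect {x θ a b : ℝ} (ha : 0 ≤ a) (hb : 0 ≤ b) :
    volume (rect (x, x) θ a b) = ENNReal.ofReal (a * b) := by
  set c := Real.cos θ
  set s' := Real.sin θ
  have pyth : s' ^ 2 + c ^ 2 = 1 := Real.sin_sq_add_cos_sq θ
  set L := Matrix.toLin (Module.Basis.finTwoProd ℝ) (Module.Basis.finTwoProd ℝ) !![c, -s'; s', c] with hL
  set S : Set (ℝ × ℝ) := Icc (-(a/2)) (a/2) ×ˢ Icc (-(b/2)) (b/2) with hS
  have himg : rect (x, x) θ a b = (fun p => (x, x) + p) '' (L '' S) := by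
    ext p
    simp only [rect, mem_setOf_eq, Set.image_image, Set.mem_image, hS, Set.mem_prod,
      Set.mem_Icc, hL, Matrix.toLin_finTwoProd_apply, Prod.mk_add_mk, Prod.ext_iff]
    constructor
    · rintro ⟨s, t, hs, ht, h1, h2⟩
      rw [abs_le] at hs ht
      exact ⟨(s, t), ⟨hs, ht⟩, by simp; constructor <;> [linarith [h1]; linarith [h2]]⟩
    · rintro ⟨⟨s, t⟩, ⟨hs, ht⟩, h1, h2⟩
      refine ⟨s, t, abs_le.2 hs, abs_le.2 ht, ?_, ?_⟩ <;> simp at h1 h2 ⊢ <;>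
        [linarith [h1]; linarith [h2]]
  rw [himg]
  have h1 : volume ((fun p => (x, x) + p) '' (L '' S)) = volume (L '' S) := by
    rw [Set.image_add_left]
    exact measure_preimage_add volume _ _
  rw [h1, Measure.addHaar_image_linearMap]
  have hdet : LinearMap.det L = 1 := by
    rw [hL, LinearMap.det_toLin, Matrix.det_fin_two_of]
    linear_combination pyth
  rw [hdet]
  simp only [abs_one, ENNReal.ofReal_one, one_mul]
  rw [hS, Measure.volume_eq_prod, Measure.prod_prod, Real.volume_Icc, Real.volume_Icc,
    ← ENNReal.ofReal_mul (by linarith)]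
  congr 1
  ring


lemma aux_trig {r : ℝ} (hr0 : 0 < r) (hr1 : r ≤ 1) :
    1/12 ≤ Real.cos r + Real.sin r ∧ (r ≤ 1/2 → 1/12 ≤ Real.cos r - Real.sin r) ∧
      (r = 1 → 1/12 ≤ Real.sin r - Real.cos r) := by
  have hcos : 1 - r ^ 2 / 2 ≤ Real.cos r := Real.one_sub_sq_div_two_le_cos
  have hsin0 : 0 ≤ Real.sin r := Real.sin_nonneg_of_nonneg_of_le_pi (le_of_lt hr0)
    (le_trans hr1 (by linarith [Real.pi_gt_three]))
  refine ⟨by nlinarith, fun h2 => ?_, fun h1 => ?_⟩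
  · have hsr : Real.sin r ≤ r := Real.sin_le (le_of_lt hr0)
    nlinarith
  · subst h1
    have h3 : (1:ℝ) - 1 ^ 3 / 4 < Real.sin 1 := by
      have := Real.sin_gt_sub_cube (x := 1) one_pos; linarith
    have h4 : Real.cos 1 ≤ 2/3 := by have := Real.cos_one_le; linarith
    nlinarith


lemma angle_bound {j : ℕ} {θ : ℝ}
    (hθ : θ = π / 4 + (2 : ℝ) ^ (-(j : ℝ)) ∨ θ = π / 4 - (2 : ℝ) ^ (-(j : ℝ))) :
    1/20 ≤ |Real.cos θ| ∧ 1/20 ≤ |Real.sin θ| := by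
  set r : ℝ := (2 : ℝ) ^ (-(j : ℝ)) with hr
  have hr0 : 0 < r := Real.rpow_pos_of_pos two_pos _
  have hr1 : r ≤ 1 := Real.rpow_le_one_of_one_le_of_nonpos one_le_two
    (neg_nonpos.2 (Nat.cast_nonneg j))
  obtain ⟨h1, h2, h3⟩ := aux_trig hr0 hr1
  have hdiff : 1/12 ≤ |Real.cos r - Real.sin r| := by
    rcases Nat.eq_zero_or_pos j with hj | hj
    · have : r = 1 := by rw [hr, hj]; norm_num
      rw [abs_sub_comm]
      exact le_trans (h3 this) (le_abs_self _)
    · have : r ≤ 1/2 := by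
        rw [hr]
        calc (2:ℝ) ^ (-(j:ℝ)) ≤ (2:ℝ) ^ (-(1:ℝ)) := by
              apply Real.rpow_le_rpow_of_exponent_le one_le_two
              simp only [neg_le_neg_iff]
              exact_mod_cast hj
        _ = 1/2 := by
              rw [Real.rpow_neg_one]; norm_num
      exact le_trans (h2 this) (le_abs_self _)
  have hsqrt2 : (1.4:ℝ) ≤ Real.sqrt 2 := by
    rw [show (1.4:ℝ) = Real.sqrt (1.4^2) from (Real.sqrt_sq (by norm_num)).symm]
    apply Real.sqrt_le_sqrt; norm_num
  have habs : ∀ X : ℝ, 1/12 ≤ |X| → 1/20 ≤ |Real.sqrt 2 / 2 * X| := by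
    intro X hX
    rw [abs_mul, abs_of_nonneg (by positivity : (0:ℝ) ≤ Real.sqrt 2 / 2)]
    nlinarith [abs_nonneg X]
  have h1' : 1/12 ≤ |Real.cos r + Real.sin r| := le_trans h1 (le_abs_self _)
  rcases hθ with h | h <;> rw [h]
  · rw [Real.cos_add, Real.sin_add, Real.cos_pi_div_four, Real.sin_pi_div_four]
    constructor
    · have e : Real.sqrt 2 / 2 * Real.cos r - Real.sqrt 2 / 2 * Real.sin r
          = Real.sqrt 2 / 2 * (Real.cos r - Real.sin r) := by ring
      rw [e]; exact habs _ hdiff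
    · have e : Real.sqrt 2 / 2 * Real.cos r + Real.sqrt 2 / 2 * Real.sin r
          = Real.sqrt 2 / 2 * (Real.cos r + Real.sin r) := by ring
      rw [e]; exact habs _ h1'
  · rw [Real.cos_sub, Real.sin_sub, Real.cos_pi_div_four, Real.sin_pi_div_four]
    constructor
    · have e : Real.sqrt 2 / 2 * Real.cos r + Real.sqrt 2 / 2 * Real.sin r
          = Real.sqrt 2 / 2 * (Real.cos r + Real.sin r) := by ring
      rw [e]; exact habs _ h1'
    · have e : Real.sqrt 2 / 2 * Real.cos r - Real.sqrt 2 / 2 * Real.sin r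
          = Real.sqrt 2 / 2 * (Real.cos r - Real.sin r) := by ring
      rw [e]; exact habs _ hdiff


lemma setLIntegral_fst_le {W : Set (ℝ × ℝ)} (hW : MeasurableSet W) {I : Set ℝ}
    (hI : MeasurableSet I) (hrange : ∀ p ∈ W, p.1 ∈ I) {κ : ℝ≥0∞}
    (hslice : ∀ y : ℝ, volume {z : ℝ | (y, z) ∈ W} ≤ κ)
    {H : ℝ → ℝ≥0∞} (hH : Measurable H) :
    ∫⁻ p in W, H p.1 ≤ κ * ∫⁻ y in I, H y := by
  have hmeas : Measurable (W.indicator (fun p : ℝ × ℝ => H p.1)) :=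
    (hH.comp measurable_fst).indicator hW
  rw [← lintegral_indicator hW, Measure.volume_eq_prod,
    lintegral_prod _ hmeas.aemeasurable]
  have step1 : ∀ y : ℝ, (∫⁻ z, W.indicator (fun p : ℝ × ℝ => H p.1) (y, z))
      ≤ I.indicator (fun y => H y * κ) y := by
    intro y
    have e : (fun z => W.indicator (fun p : ℝ × ℝ => H p.1) (y, z))
        = {z : ℝ | (y, z) ∈ W}.indicator (fun _ => H y) := by
      ext z
      by_cases hz : (y, z) ∈ W <;> simp [indicator, hz]
    rw [e, lintegral_indicator (show MeasurableSet {z : ℝ | (y, z) ∈ W} from measurable_prodMk_left hW), setLIntegral_const]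
    by_cases hy : ∃ z, (y, z) ∈ W
    · obtain ⟨z0, hz0⟩ := hy
      rw [indicator_of_mem (hrange _ hz0)]
      exact mul_le_mul_right (hslice y) _
    · have he : {z : ℝ | (y, z) ∈ W} = ∅ := by
        ext z; simp only [mem_setOf_eq, mem_empty_iff_false, iff_false]
        exact fun h => hy ⟨z, h⟩
      rw [he]
      simp
  calc (∫⁻ y, ∫⁻ z, W.indicator (fun p : ℝ × ℝ => H p.1) (y, z))
      ≤ ∫⁻ y, I.indicator (fun y => H y * κ) y := lintegral_mono step1
    _ = ∫⁻ y in I, H y * κ := lintegral_indicator hI _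
    _ = (∫⁻ y in I, H y) * κ := lintegral_mul_const κ (hH.comp measurable_id)
    _ = κ * ∫⁻ y in I, H y := mul_comm _ _


lemma setLIntegral_snd_le {W : Set (ℝ × ℝ)} (hW : MeasurableSet W) {I : Set ℝ}
    (hI : MeasurableSet I) (hrange : ∀ p ∈ W, p.2 ∈ I) {κ : ℝ≥0∞}
    (hslice : ∀ z : ℝ, volume {y : ℝ | (y, z) ∈ W} ≤ κ)
    {H : ℝ → ℝ≥0∞} (hH : Measurable H) :
    ∫⁻ p in W, H p.2 ≤ κ * ∫⁻ y in I, H y := by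
  have hmeas : Measurable (W.indicator (fun p : ℝ × ℝ => H p.2)) :=
    (hH.comp measurable_snd).indicator hW
  rw [← lintegral_indicator hW, Measure.volume_eq_prod,
    lintegral_prod_symm _ hmeas.aemeasurable]
  have step1 : ∀ z : ℝ, (∫⁻ y, W.indicator (fun p : ℝ × ℝ => H p.2) (y, z))
      ≤ I.indicator (fun z => H z * κ) z := by
    intro z
    have e : (fun y => W.indicator (fun p : ℝ × ℝ => H p.2) (y, z))
        = {y : ℝ | (y, z) ∈ W}.indicator (fun _ => H z) := by
      ext y
      by_cases hz : (y, z) ∈ W <;> simp [indicator, hz]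
    rw [e, lintegral_indicator (show MeasurableSet {y : ℝ | (y, z) ∈ W} from measurable_prodMk_right hW), setLIntegral_const]
    by_cases hy : ∃ y, (y, z) ∈ W
    · obtain ⟨y0, hy0⟩ := hy
      rw [indicator_of_mem (hrange _ hy0)]
      exact mul_le_mul_right (hslice z) _
    · have he : {y : ℝ | (y, z) ∈ W} = ∅ := by
        ext y; simp only [mem_setOf_eq, mem_empty_iff_false, iff_false]
        exact fun h => hy ⟨y, h⟩
      rw [he]
      simp
  calc (∫⁻ z, ∫⁻ y, W.indicator (fun p : ℝ × ℝ => H p.2) (y, z))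
      ≤ ∫⁻ z, I.indicator (fun z => H z * κ) z := lintegral_mono step1
    _ = ∫⁻ z in I, H z * κ := lintegral_indicator hI _
    _ = (∫⁻ z in I, H z) * κ := lintegral_mul_const κ (hH.comp measurable_id)
    _ = κ * ∫⁻ z in I, H z := mul_comm _ _


lemma mul_le_sq_add_sq (α β : ℝ≥0∞) : α * β ≤ α ^ 2 + β ^ 2 := by
  rcases le_total α β with h | h
  · calc α * β ≤ β * β := mul_le_mul_left h β
      _ = β ^ 2 := (sq β).symm
      _ ≤ α ^ 2 + β ^ 2 := le_add_self
  · calc α * β ≤ α * α := mul_le_mul_right h α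
      _ = α ^ 2 := (sq α).symm
      _ ≤ α ^ 2 + β ^ 2 := le_self_add


lemma avg_rect_le (f g : ℝ → ℂ) (hf : Continuous f) (hg : Continuous g) {x θ a b : ℝ}
    (hb : 0 < b) (hba : b ≤ a) (hc : 1/20 ≤ |Real.cos θ|) (hs : 1/20 ≤ |Real.sin θ|) :
    avgOn (rect (x, x) θ a b) (fun p => (‖f p.1 * g p.2‖₊ : ℝ≥0∞))
      ≤ ENNReal.ofReal (20 / a) *
        ∫⁻ y in Icc (x - a) (x + a), ((‖f y‖₊ : ℝ≥0∞) ^ 2 + (‖g y‖₊ : ℝ≥0∞) ^ 2) := by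
  have ha : 0 < a := lt_of_lt_of_le hb hba
  have hcne : Real.cos θ ≠ 0 := abs_pos.1 (lt_of_lt_of_le (by norm_num) hc)
  have hsne : Real.sin θ ≠ 0 := abs_pos.1 (lt_of_lt_of_le (by norm_num) hs)
  set H : ℝ → ℝ≥0∞ := fun y => (‖f y‖₊ : ℝ≥0∞) ^ 2 with hH
  set G : ℝ → ℝ≥0∞ := fun y => (‖g y‖₊ : ℝ≥0∞) ^ 2 with hG
  have hHm : Measurable H := by fun_prop
  have hGm : Measurable G := by fun_prop
  set R := rect (x, x) θ a b with hR
  set I : Set ℝ := Icc (x - a) (x + a) with hI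
  have hbκc : ENNReal.ofReal (b / |Real.cos θ|) ≤ ENNReal.ofReal (20 * b) := by
    apply ENNReal.ofReal_le_ofReal
    calc b / |Real.cos θ| ≤ b / (1/20) :=
          div_le_div_of_nonneg_left hb.le (by norm_num) hc
      _ = 20 * b := by ring
  have hbκs : ENNReal.ofReal (b / |Real.sin θ|) ≤ ENNReal.ofReal (20 * b) := by
    apply ENNReal.ofReal_le_ofReal
    calc b / |Real.sin θ| ≤ b / (1/20) :=
          div_le_div_of_nonneg_left hb.le (by norm_num) hs
      _ = 20 * b := by ring
  have num_le : (∫⁻ p in R, (‖f p.1 * g p.2‖₊ : ℝ≥0∞))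
      ≤ ENNReal.ofReal (20 * b) * ∫⁻ y in I, (H y + G y) := by
    calc (∫⁻ p in R, (‖f p.1 * g p.2‖₊ : ℝ≥0∞))
        ≤ ∫⁻ p in R, (H p.1 + G p.2) := by
          apply lintegral_mono
          intro p
          calc (‖f p.1 * g p.2‖₊ : ℝ≥0∞) = (‖f p.1‖₊ : ℝ≥0∞) * (‖g p.2‖₊ : ℝ≥0∞) := by
                rw [nnnorm_mul, ENNReal.coe_mul]
            _ ≤ H p.1 + G p.2 := mul_le_sq_add_sq _ _
      _ = (∫⁻ p in R, H p.1) + ∫⁻ p in R, G p.2 :=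
          lintegral_add_left (hHm.comp measurable_fst) _
      _ ≤ (ENNReal.ofReal (20 * b) * ∫⁻ y in I, H y)
          + ENNReal.ofReal (20 * b) * ∫⁻ y in I, G y := by
          apply add_le_add
          · refine setLIntegral_fst_le measurableSet_rect measurableSet_Icc
              (fun p hp => rect_fst_mem hb.le hba hp) (fun y => ?_) hHm
            exact le_trans (rect_slice_snd_le hb.le hcne y) hbκc
          · refine setLIntegral_snd_le measurableSet_rect measurableSet_Icc
              (fun p hp => rect_snd_mem hb.le hba hp) (fun z => ?_) hGm
            exact le_trans (rect_slice_fst_le hb.le hsne z) hbκs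
      _ = ENNReal.ofReal (20 * b) * ∫⁻ y in I, (H y + G y) := by
          rw [lintegral_add_left hHm, mul_add]
  rw [avgOn, show volume R = ENNReal.ofReal (a * b) from volume_rect ha.le hb.le]
  calc (∫⁻ p in R, (‖f p.1 * g p.2‖₊ : ℝ≥0∞)) / ENNReal.ofReal (a * b)
      ≤ (ENNReal.ofReal (20 * b) * ∫⁻ y in I, (H y + G y)) / ENNReal.ofReal (a * b) :=
        ENNReal.div_le_div_right num_le _
    _ = (ENNReal.ofReal (20 * b) / ENNReal.ofReal (a * b)) * ∫⁻ y in I, (H y + G y) := by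
        rw [div_eq_mul_inv, div_eq_mul_inv, mul_right_comm]
    _ = ENNReal.ofReal (20 / a) * ∫⁻ y in I, (H y + G y) := by
        rw [← ENNReal.ofReal_div_of_pos (by positivity)]
        congr 2
        field_simp


lemma weak_bound (φ : ℝ → ℝ≥0∞) (hφ : Measurable φ) (hfin : (∫⁻ y, φ y) ≠ ∞)
    {lam' : ℝ} (hlam' : 0 < lam') :
    volume {x : ℝ | ∃ a : ℝ, 0 < a ∧
        ENNReal.ofReal (lam' * a) < ∫⁻ y in Icc (x - a) (x + a), φ y}
      ≤ ENNReal.ofReal (8 / lam') * ∫⁻ y, φ y := by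
  set T := ∫⁻ y, φ y with hT
  set E := {x : ℝ | ∃ a : ℝ, 0 < a ∧
    ENNReal.ofReal (lam' * a) < ∫⁻ y in Icc (x - a) (x + a), φ y} with hE
  set μφ := volume.withDensity φ with hμφ
  set R : ℝ := T.toReal / lam' with hRdef
  have hex : ∀ x ∈ E, ∃ a : ℝ, 0 < a ∧ a ≤ R ∧
      ENNReal.ofReal (lam' * a) < μφ (Metric.closedBall x a) := by
    intro x hx
    obtain ⟨a, ha0, ha⟩ := hx
    refine ⟨a, ha0, ?_, ?_⟩
    · have hle : ENNReal.ofReal (lam' * a) ≤ T :=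
        le_trans ha.le (setLIntegral_le_lintegral _ _)
      have h2 : lam' * a ≤ T.toReal := (ENNReal.ofReal_le_iff_le_toReal hfin).1 hle
      rw [hRdef]
      calc a = lam' * a / lam' := by field_simp
        _ ≤ T.toReal / lam' := by gcongr
    · rw [Real.closedBall_eq_Icc, hμφ, withDensity_apply _ measurableSet_Icc]
      exact ha
  choose! r hr0 hrR hrlt using hex
  obtain ⟨u, huE, hdisj, hcover⟩ :=
    Vitali.exists_disjoint_subfamily_covering_enlargement_closedBall E id r R hrR 4
      (by norm_num)
  simp only [id_eq] at hdisj hcover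
  have cover : E ⊆ ⋃ b ∈ u, Metric.closedBall b (4 * r b) := by
    intro x hx
    obtain ⟨b, hbu, hsub⟩ := hcover x hx
    exact mem_biUnion hbu (hsub (Metric.mem_closedBall_self (hr0 x hx).le))
  have hcnt : u.Countable := by
    apply Set.PairwiseDisjoint.countable_of_isOpen
      (s := fun b => Metric.ball b (r b))
    · exact hdisj.mono_on fun b hb => Metric.ball_subset_closedBall
    · exact fun b _ => Metric.isOpen_ball
    · exact fun b hb => Metric.nonempty_ball.2 (hr0 b (huE hb))
  have perball : ∀ b ∈ u, volume (Metric.closedBall b (4 * r b))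
      ≤ ENNReal.ofReal (8 / lam') * μφ (Metric.closedBall b (r b)) := by
    intro b hb
    have h1 : ENNReal.ofReal (lam' * r b) ≤ μφ (Metric.closedBall b (r b)) :=
      (hrlt b (huE hb)).le
    rw [Real.volume_closedBall]
    calc ENNReal.ofReal (2 * (4 * r b))
        = ENNReal.ofReal ((8 / lam') * (lam' * r b)) := by
          congr 1; field_simp; ring
      _ = ENNReal.ofReal (8 / lam') * ENNReal.ofReal (lam' * r b) :=
          ENNReal.ofReal_mul (by positivity)
      _ ≤ ENNReal.ofReal (8 / lam') * μφ (Metric.closedBall b (r b)) :=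
          mul_le_mul_right h1 _
  calc volume E ≤ volume (⋃ b ∈ u, Metric.closedBall b (4 * r b)) := measure_mono cover
    _ ≤ ∑' b : u, volume (Metric.closedBall (b : ℝ) (4 * r (b : ℝ))) :=
        measure_biUnion_le (volume : Measure ℝ) hcnt _
    _ ≤ ∑' b : u, ENNReal.ofReal (8 / lam') * μφ (Metric.closedBall (b : ℝ) (r b)) :=
        ENNReal.tsum_le_tsum fun b => perball b b.2
    _ = ENNReal.ofReal (8 / lam') * ∑' b : u, μφ (Metric.closedBall (b : ℝ) (r b)) :=
        ENNReal.tsum_mul_left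
    _ = ENNReal.ofReal (8 / lam') * μφ (⋃ b ∈ u, Metric.closedBall b (r b)) := by
        rw [measure_biUnion hcnt hdisj fun b _ => measurableSet_closedBall]
    _ ≤ ENNReal.ofReal (8 / lam') * μφ univ :=
        mul_le_mul_right (measure_mono (subset_univ _)) _
    _ = ENNReal.ofReal (8 / lam') * T := by
        rw [hμφ, withDensity_apply _ MeasurableSet.univ, setLIntegral_univ, hT]


lemma sq_eLpNorm (f : ℝ → ℂ) :
    (∫⁻ y, (‖f y‖₊ : ℝ≥0∞) ^ 2) = (eLpNorm f 2 volume) ^ 2 := by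
  rw [eLpNorm_eq_lintegral_rpow_enorm (by norm_num) (by norm_num)]
  rw [← ENNReal.rpow_natCast _ 2, ← ENNReal.rpow_mul]
  have h2 : ((2:ℝ≥0∞)).toReal = 2 := by norm_num
  rw [h2]
  norm_num
  rfl


lemma schwartz_sq_fin (f : SchwartzMap ℝ ℂ) :
    (∫⁻ y, (‖f y‖₊ : ℝ≥0∞) ^ 2) ≠ ∞ := by
  set M : ℝ := SchwartzMap.seminorm ℝ 0 0 f with hM
  have hMb : ∀ y : ℝ, ‖f y‖ ≤ M := fun y => SchwartzMap.norm_le_seminorm ℝ f y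
  have hint : (∫⁻ y, (‖f y‖₊ : ℝ≥0∞)) ≠ ∞ := by
    have h := (f.integrable (μ := volume)).hasFiniteIntegral
    exact ne_of_lt h
  have hpt : ∀ y : ℝ, (‖f y‖₊ : ℝ≥0∞) ^ 2 ≤ ENNReal.ofReal M * (‖f y‖₊ : ℝ≥0∞) := by
    intro y
    rw [sq]
    apply mul_le_mul_left
    change ‖f y‖ₑ ≤ _
    rw [← ofReal_norm_eq_enorm]
    exact ENNReal.ofReal_le_ofReal (hMb y)
  have hle : (∫⁻ y, (‖f y‖₊ : ℝ≥0∞) ^ 2)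
      ≤ ENNReal.ofReal M * ∫⁻ y, (‖f y‖₊ : ℝ≥0∞) := by
    calc (∫⁻ y, (‖f y‖₊ : ℝ≥0∞) ^ 2)
        ≤ ∫⁻ y, ENNReal.ofReal M * (‖f y‖₊ : ℝ≥0∞) := lintegral_mono hpt
      _ = ENNReal.ofReal M * ∫⁻ y, (‖f y‖₊ : ℝ≥0∞) := by
          rw [lintegral_const_mul _ (by have hf := f.continuous; fun_prop)]
  exact ne_top_of_le_ne_top (ENNReal.mul_ne_top ENNReal.ofReal_ne_top hint) hle


lemma core_bound (f g : SchwartzMap ℝ ℂ) {lam : ℝ} (hlam : 0 < lam) :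
    volume {x : ℝ | ENNReal.ofReal lam < lacMax (⇑f) (⇑g) x}
      ≤ ENNReal.ofReal (160 / lam) *
        ((∫⁻ y, (‖f y‖₊ : ℝ≥0∞) ^ 2) + ∫⁻ y, (‖g y‖₊ : ℝ≥0∞) ^ 2) := by
  set φ : ℝ → ℝ≥0∞ := fun y => (‖f y‖₊ : ℝ≥0∞) ^ 2 + (‖g y‖₊ : ℝ≥0∞) ^ 2 with hφ
  have hφm : Measurable φ := by
    have hf := f.continuous
    have hg := g.continuous
    fun_prop
  have hfin : (∫⁻ y, φ y) ≠ ∞ := by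
    rw [hφ]
    rw [lintegral_add_left (by have hf := f.continuous; fun_prop)]
    exact ENNReal.add_ne_top.2 ⟨schwartz_sq_fin f, schwartz_sq_fin g⟩
  have hsub : {x : ℝ | ENNReal.ofReal lam < lacMax (⇑f) (⇑g) x}
      ⊆ {x : ℝ | ∃ a : ℝ, 0 < a ∧
          ENNReal.ofReal ((lam/20) * a) < ∫⁻ y in Icc (x - a) (x + a), φ y} := by
    intro x hx
    simp only [mem_setOf_eq, lacMax, lt_iSup_iff] at hx
    obtain ⟨j, θ, hθ, a, b, hb, hba, hx⟩ := hx
    have ha : 0 < a := lt_of_lt_of_le hb hba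
    obtain ⟨hc, hs⟩ := angle_bound hθ
    have key := avg_rect_le (⇑f) (⇑g) f.continuous g.continuous (x := x) hb hba hc hs
    have hx2 : ENNReal.ofReal lam
        < ENNReal.ofReal (20 / a) * ∫⁻ y in Icc (x - a) (x + a), φ y :=
      lt_of_lt_of_le hx key
    refine ⟨a, ha, ?_⟩
    have hc20 : (ENNReal.ofReal (a/20)) ≠ 0 := ne_of_gt (ENNReal.ofReal_pos.2 (by positivity))
    have h3 : ENNReal.ofReal lam * ENNReal.ofReal (a/20)
        < (ENNReal.ofReal (20 / a) * ∫⁻ y in Icc (x - a) (x + a), φ y) * ENNReal.ofReal (a/20) := by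
      rw [mul_comm _ (ENNReal.ofReal (a/20)), mul_comm _ (ENNReal.ofReal (a/20))]
      exact ENNReal.mul_lt_mul_right hc20 ENNReal.ofReal_ne_top hx2
    calc ENNReal.ofReal ((lam/20) * a)
        = ENNReal.ofReal lam * ENNReal.ofReal (a/20) := by
          rw [← ENNReal.ofReal_mul hlam.le]; congr 1; ring
      _ < (ENNReal.ofReal (20 / a) * ∫⁻ y in Icc (x - a) (x + a), φ y)
            * ENNReal.ofReal (a/20) := h3
      _ = (ENNReal.ofReal (20 / a) * ENNReal.ofReal (a/20))
            * ∫⁻ y in Icc (x - a) (x + a), φ y := by rw [mul_right_comm]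
      _ = ∫⁻ y in Icc (x - a) (x + a), φ y := by
          rw [← ENNReal.ofReal_mul (by positivity)]
          rw [show (20/a) * (a/20) = 1 by field_simp]
          simp
  calc volume {x : ℝ | ENNReal.ofReal lam < lacMax (⇑f) (⇑g) x}
      ≤ volume {x : ℝ | ∃ a : ℝ, 0 < a ∧
          ENNReal.ofReal ((lam/20) * a) < ∫⁻ y in Icc (x - a) (x + a), φ y} :=
        measure_mono hsub
    _ ≤ ENNReal.ofReal (8 / (lam/20)) * ∫⁻ y, φ y :=
        weak_bound φ hφm hfin (by positivity)
    _ = ENNReal.ofReal (160 / lam) *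
        ((∫⁻ y, (‖f y‖₊ : ℝ≥0∞) ^ 2) + ∫⁻ y, (‖g y‖₊ : ℝ≥0∞) ^ 2) := by
        rw [show 8 / (lam/20) = 160 / lam by field_simp; ring]
        congr 1
        rw [hφ, lintegral_add_left (by have hf := f.continuous; fun_prop)]


lemma lacMax_zero_left (g : ℝ → ℂ) (x : ℝ) : lacMax (fun _ => (0:ℂ)) g x = 0 := by
  simp [lacMax, avgOn]


lemma lacMax_zero_right (f : ℝ → ℂ) (x : ℝ) : lacMax f (fun _ => (0:ℂ)) x = 0 := by
  simp [lacMax, avgOn]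


lemma schwartz_eq_zero_of_eLpNorm {f : SchwartzMap ℝ ℂ}
    (h : eLpNorm (⇑f) 2 volume = 0) : ⇑f = fun _ => (0:ℂ) := by
  have hae := (eLpNorm_eq_zero_iff f.continuous.aestronglyMeasurable (by norm_num)).1 h
  exact (Continuous.ae_eq_iff_eq volume f.continuous continuous_const).1 hae


/-- Theorem 2 of the paper: the bilinear lacunary maximal operator maps
`L²(ℝ) × L²(ℝ)` to `L^{1,∞}(ℝ)`. -/
theorem bilinear_lacunary_weak_type :
    ∃ C : ℝ, 0 < C ∧
      ∀ f g : SchwartzMap ℝ ℂ, ∀ lam : ℝ, 0 < lam →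
        volume {x : ℝ | ENNReal.ofReal lam < lacMax (⇑f) (⇑g) x} ≤
          ENNReal.ofReal (C / lam) *
            (eLpNorm (⇑f) 2 volume * eLpNorm (⇑g) 2 volume) := by
  refine ⟨320, by norm_num, fun f g lam hlam => ?_⟩
  set Nf := eLpNorm (⇑f) 2 volume with hNf
  set Ng := eLpNorm (⇑g) 2 volume with hNg
  have hNf_top : Nf ≠ ∞ := by
    intro h
    have := schwartz_sq_fin f
    rw [sq_eLpNorm, ← hNf, h] at this
    simp at this
  have hNg_top : Ng ≠ ∞ := by
    intro h
    have := schwartz_sq_fin g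
    rw [sq_eLpNorm, ← hNg, h] at this
    simp at this
  by_cases hf0 : Nf = 0
  · have hz := schwartz_eq_zero_of_eLpNorm hf0
    have : {x : ℝ | ENNReal.ofReal lam < lacMax (⇑f) (⇑g) x} = ∅ := by
      ext x
      simp only [mem_setOf_eq, mem_empty_iff_false, iff_false, not_lt, hz,
        lacMax_zero_left]
      exact zero_le
    rw [this]
    simp
  by_cases hg0 : Ng = 0
  · have hz := schwartz_eq_zero_of_eLpNorm hg0
    have : {x : ℝ | ENNReal.ofReal lam < lacMax (⇑f) (⇑g) x} = ∅ := by
      ext x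
      simp only [mem_setOf_eq, mem_empty_iff_false, iff_false, not_lt, hz,
        lacMax_zero_right]
      exact zero_le
    rw [this]
    simp
  -- main case
  set nf := Nf.toReal with hnf
  set ng := Ng.toReal with hng
  have hnf0 : 0 < nf := ENNReal.toReal_pos hf0 hNf_top
  have hng0 : 0 < ng := ENNReal.toReal_pos hg0 hNg_top
  set t : ℝ := Real.sqrt (ng / nf) with ht
  have ht0 : 0 < t := Real.sqrt_pos.2 (by positivity)
  have ht2 : t ^ 2 = ng / nf := Real.sq_sqrt (by positivity)
  have hlac : lacMax (⇑(t • f)) (⇑(t⁻¹ • g)) = lacMax (⇑f) (⇑g) := by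
    funext x
    have hfun : (fun p : ℝ × ℝ => ((‖(t • f) p.1 * (t⁻¹ • g) p.2‖₊ : ℝ≥0∞)))
        = fun p : ℝ × ℝ => ((‖f p.1 * g p.2‖₊ : ℝ≥0∞)) := by
      funext p
      have : (t • f) p.1 * (t⁻¹ • g) p.2 = f p.1 * g p.2 := by
        simp only [SchwartzMap.smul_apply, Complex.real_smul, Complex.ofReal_inv]
        have htc : (t : ℂ) ≠ 0 := by exact_mod_cast ht0.ne'
        field_simp
      rw [this]
    simp only [lacMax, hfun]
  have key := core_bound (t • f) (t⁻¹ • g) hlam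
  rw [hlac] at key
  have hA : (∫⁻ y, (‖(t • f) y‖₊ : ℝ≥0∞) ^ 2) = ENNReal.ofReal (nf * ng) := by
    rw [sq_eLpNorm, show (⇑(t • f) : ℝ → ℂ) = t • ⇑f from rfl, eLpNorm_const_smul]
    have h1 : ‖t‖ₑ = ENNReal.ofReal t := (Real.enorm_eq_ofReal ht0.le)
    rw [h1, ← hNf, show Nf = ENNReal.ofReal nf from (ENNReal.ofReal_toReal hNf_top).symm]
    rw [← ENNReal.ofReal_mul ht0.le, ← ENNReal.ofReal_pow (by positivity)]
    congr 1
    rw [mul_pow, ht2]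
    field_simp
  have hB : (∫⁻ y, (‖(t⁻¹ • g) y‖₊ : ℝ≥0∞) ^ 2) = ENNReal.ofReal (nf * ng) := by
    rw [sq_eLpNorm, show (⇑(t⁻¹ • g) : ℝ → ℂ) = t⁻¹ • ⇑g from rfl, eLpNorm_const_smul]
    have h1 : ‖t⁻¹‖ₑ = ENNReal.ofReal t⁻¹ := (Real.enorm_eq_ofReal (by positivity))
    rw [h1, ← hNg, show Ng = ENNReal.ofReal ng from (ENNReal.ofReal_toReal hNg_top).symm]
    rw [← ENNReal.ofReal_mul (by positivity), ← ENNReal.ofReal_pow (by positivity)]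
    congr 1
    rw [mul_pow, inv_pow, ht2]
    field_simp
  rw [hA, hB] at key
  calc volume {x : ℝ | ENNReal.ofReal lam < lacMax (⇑f) (⇑g) x}
      ≤ ENNReal.ofReal (160 / lam) * (ENNReal.ofReal (nf * ng) + ENNReal.ofReal (nf * ng)) :=
        key
    _ = ENNReal.ofReal (320 / lam) * ENNReal.ofReal (nf * ng) := by
        rw [← ENNReal.ofReal_add (by positivity) (by positivity),
          ← ENNReal.ofReal_mul (by positivity), ← ENNReal.ofReal_mul (by positivity)]
        congr 1
        ring
    _ = ENNReal.ofReal (320 / lam) * (Nf * Ng) := by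
        rw [show Nf = ENNReal.ofReal nf from (ENNReal.ofReal_toReal hNf_top).symm,
          show Ng = ENNReal.ofReal ng from (ENNReal.ofReal_toReal hNg_top).symm,
          ← ENNReal.ofReal_mul (p := nf) (by positivity),
          ← ENNReal.ofReal_mul (by positivity)]
end

section
/- There is an absolute constant C such that for every δ ∈ (0,1), all Schwartz functions f, g on ℝ, and all λ > 0, the set E_λ = { x ∈ ℝ : 𝔐_δ(f,g)(x) ≥ λ } satisfies |E_λ| ≤ C · δ^{-1/2} · λ^{-1} · ‖f‖_{L²(ℝ)} ‖g‖_{L²(ℝ)}. -/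
open MeasureTheory Set Real
open scoped ENNReal NNReal

/-- The bilinear Kakeya-type maximal operator: the supremum, over all `1 × δ`
rectangles centered at `(x, x)` whose longest side points along a direction
(angle) in `Ω`, of the average of `|f(y) g(z)|` over the rectangle. -/
noncomputable def kakeyaMax (Ω : Set ℝ) (δ : ℝ) (f g : ℝ → ℂ) (x : ℝ) : ℝ≥0∞ :=
  ⨆ θ ∈ Ω, avgOn (rect (x, x) θ 1 δ) (fun p => (‖f p.1 * g p.2‖₊ : ℝ≥0∞))

def rectCF (x θ δ : ℝ) : Set (ℝ × ℝ) := {p : ℝ × ℝ |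
      |Real.cos θ * (p.1 - x) + Real.sin θ * (p.2 - x)| ≤ 1 / 2 ∧
      |(-Real.sin θ) * (p.1 - x) + Real.cos θ * (p.2 - x)| ≤ δ / 2}
lemma rect_eq (x θ δ : ℝ) :
    rect (x, x) θ 1 δ = rectCF x θ δ := by
  have pyth := Real.sin_sq_add_cos_sq θ
  ext p
  simp only [rect, rectCF, mem_setOf_eq]
  constructor
  · rintro ⟨s, t, hs, ht, hp⟩
    have h1 : p.1 = x + s * Real.cos θ - t * Real.sin θ := by rw [hp]
    have h2 : p.2 = x + s * Real.sin θ + t * Real.cos θ := by rw [hp]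
    have e1 : Real.cos θ * (p.1 - x) + Real.sin θ * (p.2 - x) = s := by
      rw [h1, h2]; ring_nf; linear_combination s * pyth
    have e2 : (-Real.sin θ) * (p.1 - x) + Real.cos θ * (p.2 - x) = t := by
      rw [h1, h2]; ring_nf; linear_combination t * pyth
    rw [e1, e2]
    exact ⟨by simpa using hs, ht⟩
  · rintro ⟨h1, h2⟩
    refine ⟨Real.cos θ * (p.1 - x) + Real.sin θ * (p.2 - x),
      (-Real.sin θ) * (p.1 - x) + Real.cos θ * (p.2 - x), by simpa using h1, h2, ?_⟩
    have e1 : p.1 = x + (Real.cos θ * (p.1 - x) + Real.sin θ * (p.2 - x)) * Real.cos θ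
        - ((-Real.sin θ) * (p.1 - x) + Real.cos θ * (p.2 - x)) * Real.sin θ := by
      ring_nf; linear_combination (x - p.1) * pyth
    have e2 : p.2 = x + (Real.cos θ * (p.1 - x) + Real.sin θ * (p.2 - x)) * Real.sin θ
        + ((-Real.sin θ) * (p.1 - x) + Real.cos θ * (p.2 - x)) * Real.cos θ := by
      ring_nf; linear_combination (x - p.2) * pyth
    exact Prod.ext e1 e2
noncomputable def rot (θ : ℝ) : (ℝ × ℝ) →ₗ[ℝ] (ℝ × ℝ) where
  toFun p := (Real.cos θ * p.1 + Real.sin θ * p.2, -Real.sin θ * p.1 + Real.cos θ * p.2)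
  map_add' p q := by
    simp only [Prod.fst_add, Prod.snd_add, Prod.mk_add_mk, Prod.mk.injEq]
    constructor <;> ring
  map_smul' c p := by
    simp only [Prod.smul_fst, Prod.smul_snd, smul_eq_mul, Prod.smul_mk, RingHom.id_apply,
      Prod.mk.injEq]
    constructor <;> ring

lemma rot_det (θ : ℝ) : LinearMap.det (rot θ) = 1 := by
  rw [← LinearMap.det_toMatrix (Module.Basis.finTwoProd ℝ)]
  have h : (LinearMap.toMatrix (Module.Basis.finTwoProd ℝ) (Module.Basis.finTwoProd ℝ)) (rot θ) =
      !![Real.cos θ, Real.sin θ; -Real.sin θ, Real.cos θ] := by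
    ext i j
    fin_cases i <;> fin_cases j <;>
      simp [LinearMap.toMatrix_apply, rot, Module.Basis.finTwoProd]
  rw [h, Matrix.det_fin_two_of]
  linear_combination Real.sin_sq_add_cos_sq θ
lemma rectCF_preimage (x θ δ : ℝ) :
    rectCF x θ δ = (fun p : ℝ × ℝ => p + (-(x, x))) ⁻¹'
      (rot θ ⁻¹' (Icc (-(1/2) : ℝ) (1/2) ×ˢ Icc (-(δ/2) : ℝ) (δ/2))) := by
  ext p
  simp only [rectCF, mem_setOf_eq, mem_preimage, rot, LinearMap.coe_mk, AddHom.coe_mk,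
    mem_prod, mem_Icc, abs_le, Prod.fst_add, Prod.snd_add, Prod.fst_neg, Prod.snd_neg,
    ← sub_eq_add_neg]
  tauto

lemma volume_rectCF (x θ : ℝ) {δ : ℝ} (hδ : 0 < δ) :
    volume (rectCF x θ δ) = ENNReal.ofReal δ := by
  rw [rectCF_preimage, measure_preimage_add_right,
    Measure.addHaar_preimage_linearMap volume (by rw [rot_det]; norm_num),
    rot_det]
  have h : (volume : Measure (ℝ × ℝ)) = (volume : Measure ℝ).prod volume := rfl
  rw [h, Measure.prod_prod, Real.volume_Icc, Real.volume_Icc,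
    show (1:ℝ)/2 - -(1/2) = 1 by norm_num, show δ/2 - -(δ/2) = δ by ring]
  simp

lemma rectCF_mble (x θ δ : ℝ) : MeasurableSet (rectCF x θ δ) := by
  have h1 : Measurable fun p : ℝ × ℝ => Real.cos θ * (p.1 - x) + Real.sin θ * (p.2 - x) := by
    fun_prop
  have h2 : Measurable fun p : ℝ × ℝ => (-Real.sin θ) * (p.1 - x) + Real.cos θ * (p.2 - x) := by
    fun_prop
  exact (measurableSet_le h1.abs measurable_const).inter
    (measurableSet_le h2.abs measurable_const)
lemma abs_interval_vol {b : ℝ} (a r : ℝ) (hb : b ≠ 0) :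
    volume {z : ℝ | |a + b * z| ≤ r} ≤ ENNReal.ofReal (2 * r / |b|) := by
  rcases hb.lt_or_gt with h | h
  · have hsub : {z : ℝ | |a + b * z| ≤ r} ⊆ Icc ((r - a) / b) ((-r - a) / b) := by
      intro z hz
      rw [mem_setOf_eq, abs_le] at hz
      constructor
      · rw [div_le_iff_of_neg h]; linarith [hz.2]
      · rw [le_div_iff_of_neg h]; linarith [hz.1]
    refine (measure_mono hsub).trans ?_
    rw [Real.volume_Icc]
    apply ENNReal.ofReal_le_ofReal
    rw [abs_of_neg h, div_sub_div_same]
    apply le_of_eq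
    rw [show -r - a - (r - a) = -(2*r) by ring, div_neg, neg_div]
  · have hsub : {z : ℝ | |a + b * z| ≤ r} ⊆ Icc ((-r - a) / b) ((r - a) / b) := by
      intro z hz
      rw [mem_setOf_eq, abs_le] at hz
      constructor
      · rw [div_le_iff₀ h]; linarith [hz.1]
      · rw [le_div_iff₀ h]; linarith [hz.2]
    refine (measure_mono hsub).trans ?_
    rw [Real.volume_Icc]
    apply ENNReal.ofReal_le_ofReal
    rw [abs_of_pos h, div_sub_div_same]
    apply le_of_eq
    field_simp
    ring

lemma ofReal_div_abs_le {b : ℝ} (r : ℝ) (hb2 : 1/2 ≤ b ^ 2) (hr : 0 ≤ r) :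
    ENNReal.ofReal (2 * r / |b|) ≤ ENNReal.ofReal (2 * r * Real.sqrt 2) := by
  apply ENNReal.ofReal_le_ofReal
  have hb : b ≠ 0 := by intro h; rw [h] at hb2; norm_num at hb2
  have habs : 0 < |b| := abs_pos.2 hb
  rw [div_le_iff₀ habs]
  have key : 1 ≤ Real.sqrt 2 * |b| := by
    nlinarith [Real.sq_sqrt (show (0:ℝ) ≤ 2 by norm_num), Real.sqrt_nonneg 2, sq_abs b,
      abs_nonneg b, mul_nonneg (Real.sqrt_nonneg 2) (abs_nonneg b)]
  nlinarith [key, hr]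
lemma lint_fst (R : Set (ℝ × ℝ)) (hR : MeasurableSet R) (h : ℝ → ℝ≥0∞) (hh : Measurable h)
    (I : Set ℝ) (hI : MeasurableSet I) (ℓ : ℝ≥0∞)
    (hslice : ∀ y : ℝ, volume {z : ℝ | (y, z) ∈ R} ≤ ℓ)
    (hsub : ∀ p : ℝ × ℝ, p ∈ R → p.1 ∈ I) :
    ∫⁻ p in R, h p.1 ≤ ℓ * ∫⁻ y in I, h y := by
  rw [← lintegral_indicator hR]
  have hmeas : Measurable (R.indicator (fun p : ℝ × ℝ => h p.1)) :=
    (hh.comp measurable_fst).indicator hR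
  rw [show (volume : Measure (ℝ × ℝ)) = (volume : Measure ℝ).prod volume from rfl,
    lintegral_prod _ hmeas.aemeasurable]
  have key : ∀ y : ℝ, ∫⁻ z, R.indicator (fun p : ℝ × ℝ => h p.1) (y, z) ≤
      I.indicator (fun y => ℓ * h y) y := by
    intro y
    have hsm : MeasurableSet {z : ℝ | (y, z) ∈ R} := measurable_prodMk_left hR
    have he : ∀ z : ℝ, R.indicator (fun p : ℝ × ℝ => h p.1) (y, z) =
        {z : ℝ | (y, z) ∈ R}.indicator (fun _ => h y) z := by
      intro z
      by_cases hz : (y, z) ∈ R <;> simp [Set.indicator_apply, hz]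
    rw [lintegral_congr he, lintegral_indicator hsm, setLIntegral_const]
    by_cases hy : y ∈ I
    · rw [indicator_of_mem hy, mul_comm ℓ (h y)]
      exact mul_le_mul_right (hslice y) _
    · rw [indicator_of_notMem hy]
      have hempty : {z : ℝ | (y, z) ∈ R} = ∅ :=
        eq_empty_iff_forall_notMem.2 fun z hz => hy (hsub _ hz)
      simp [hempty]
  calc ∫⁻ y, ∫⁻ z, R.indicator (fun p : ℝ × ℝ => h p.1) (y, z) ≤
      ∫⁻ y, I.indicator (fun y => ℓ * h y) y := lintegral_mono key
    _ = ∫⁻ y in I, ℓ * h y := lintegral_indicator hI _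
    _ = ℓ * ∫⁻ y in I, h y := lintegral_const_mul ℓ hh

lemma lint_snd (R : Set (ℝ × ℝ)) (hR : MeasurableSet R) (h : ℝ → ℝ≥0∞) (hh : Measurable h)
    (I : Set ℝ) (hI : MeasurableSet I) (ℓ : ℝ≥0∞)
    (hslice : ∀ z : ℝ, volume {y : ℝ | (y, z) ∈ R} ≤ ℓ)
    (hsub : ∀ p : ℝ × ℝ, p ∈ R → p.2 ∈ I) :
    ∫⁻ p in R, h p.2 ≤ ℓ * ∫⁻ z in I, h z := by
  rw [← lintegral_indicator hR]
  have hmeas : Measurable (R.indicator (fun p : ℝ × ℝ => h p.2)) :=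
    (hh.comp measurable_snd).indicator hR
  rw [show (volume : Measure (ℝ × ℝ)) = (volume : Measure ℝ).prod volume from rfl,
    lintegral_prod_symm _ hmeas.aemeasurable]
  have key : ∀ z : ℝ, ∫⁻ y, R.indicator (fun p : ℝ × ℝ => h p.2) (y, z) ≤
      I.indicator (fun z => ℓ * h z) z := by
    intro z
    have hsm : MeasurableSet {y : ℝ | (y, z) ∈ R} := measurable_prodMk_right hR
    have he : ∀ y : ℝ, R.indicator (fun p : ℝ × ℝ => h p.2) (y, z) =
        {y : ℝ | (y, z) ∈ R}.indicator (fun _ => h z) y := by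
      intro y
      by_cases hy : (y, z) ∈ R <;> simp [Set.indicator_apply, hy]
    rw [lintegral_congr he, lintegral_indicator hsm, setLIntegral_const]
    by_cases hz : z ∈ I
    · rw [indicator_of_mem hz, mul_comm ℓ (h z)]
      exact mul_le_mul_right (hslice z) _
    · rw [indicator_of_notMem hz]
      have hempty : {y : ℝ | (y, z) ∈ R} = ∅ :=
        eq_empty_iff_forall_notMem.2 fun y hy => hz (hsub _ hy)
      simp [hempty]
  calc ∫⁻ z, ∫⁻ y, R.indicator (fun p : ℝ × ℝ => h p.2) (y, z) ≤
      ∫⁻ z, I.indicator (fun z => ℓ * h z) z := lintegral_mono key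
    _ = ∫⁻ z in I, ℓ * h z := lintegral_indicator hI _
    _ = ℓ * ∫⁻ z in I, h z := lintegral_const_mul ℓ hh
def stripe : Set (ℝ × ℝ) := {p : ℝ × ℝ | p.1 - 1 ≤ p.2 ∧ p.2 ≤ p.1 + 1}

lemma stripe_mble : MeasurableSet stripe := by
  have h : stripe = {p : ℝ × ℝ | p.1 - 1 ≤ p.2} ∩ {p : ℝ × ℝ | p.2 ≤ p.1 + 1} := rfl
  rw [h]
  exact (measurableSet_le (measurable_fst.sub measurable_const) measurable_snd).inter
    (measurableSet_le measurable_snd (measurable_fst.add measurable_const))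

lemma band_eq (h : ℝ → ℝ≥0∞) (x : ℝ) :
    ∫⁻ y in Icc (x-1) (x+1), h y = ∫⁻ y, stripe.indicator (fun p => h p.2) (x, y) := by
  rw [← lintegral_indicator measurableSet_Icc]
  apply lintegral_congr
  intro y
  by_cases hy : y ∈ Icc (x-1) (x+1)
  · rw [indicator_of_mem hy, indicator_of_mem]
    rw [mem_Icc] at hy
    exact ⟨hy.1, hy.2⟩
  · rw [indicator_of_notMem hy, indicator_of_notMem]
    intro hmem
    exact hy (mem_Icc.2 ⟨hmem.1, hmem.2⟩)

lemma band_measurable (h : ℝ → ℝ≥0∞) (hh : Measurable h) :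
    Measurable fun x : ℝ => ∫⁻ y in Icc (x-1) (x+1), h y := by
  simp_rw [band_eq h]
  exact Measurable.lintegral_prod_right
    (f := fun x y => stripe.indicator (fun p => h p.2) (x, y))
    ((hh.comp measurable_snd).indicator stripe_mble)

lemma band_lintegral (h : ℝ → ℝ≥0∞) (hh : Measurable h) :
    ∫⁻ x, ∫⁻ y in Icc (x-1) (x+1), h y ≤ 2 * ∫⁻ y, h y := by
  simp_rw [band_eq h]
  rw [lintegral_lintegral_swap (f := fun x y => stripe.indicator (fun p : ℝ × ℝ => h p.2) (x, y))
    (by exact ((hh.comp measurable_snd).indicator stripe_mble).aemeasurable)]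
  have key : ∀ y : ℝ, ∫⁻ x, stripe.indicator (fun p : ℝ × ℝ => h p.2) (x, y) = h y * 2 := by
    intro y
    have he : ∀ x : ℝ, stripe.indicator (fun p : ℝ × ℝ => h p.2) (x, y) =
        (Icc (y-1) (y+1)).indicator (fun _ => h y) x := by
      intro x
      by_cases hx : (x, y) ∈ stripe
      · rw [indicator_of_mem hx, indicator_of_mem]
        rw [mem_Icc]
        obtain ⟨h1, h2⟩ := hx
        constructor <;> [linarith; linarith]
      · rw [indicator_of_notMem hx, indicator_of_notMem]
        intro hmem
        rw [mem_Icc] at hmem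
        exact hx ⟨by linarith [hmem.2], by linarith [hmem.1]⟩
    rw [lintegral_congr he, lintegral_indicator measurableSet_Icc, setLIntegral_const,
      Real.volume_Icc, show y + 1 - (y - 1) = 2 by ring]
    norm_num
  rw [lintegral_congr key, lintegral_mul_const 2 hh, mul_comm]
lemma avg_bound {δ : ℝ} (hδ0 : 0 < δ) (hδ1 : δ ≤ 1) (f g : ℝ → ℂ)
    (hf : Measurable f) (hg : Measurable g) (x θ : ℝ) :
    avgOn (rect (x, x) θ 1 δ) (fun p => (‖f p.1 * g p.2‖₊ : ℝ≥0∞)) ≤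
      ENNReal.ofReal (Real.sqrt (2/δ)) *
        ((∫⁻ y in Icc (x-1) (x+1), (‖f y‖₊ : ℝ≥0∞) ^ (2:ℝ)) *
         (∫⁻ z in Icc (x-1) (x+1), (‖g z‖₊ : ℝ≥0∞) ^ (2:ℝ))) ^ (1/2:ℝ) := by
  have pyth := Real.sin_sq_add_cos_sq θ
  set R : Set (ℝ × ℝ) := rect (x, x) θ 1 δ with hRdef
  have hRCF : R = rectCF x θ δ := rect_eq x θ δ
  have hRm : MeasurableSet R := by rw [hRCF]; exact rectCF_mble x θ δ
  have hvol : volume R = ENNReal.ofReal δ := by rw [hRCF]; exact volume_rectCF x θ hδ0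
  -- membership bounds
  have hsub1 : ∀ p : ℝ × ℝ, p ∈ R → p.1 ∈ Icc (x-1) (x+1) := by
    intro p hp
    rw [hRCF] at hp
    obtain ⟨h1, h2⟩ := hp
    rw [abs_le] at h1 h2
    have e : p.1 - x = Real.cos θ * (Real.cos θ * (p.1 - x) + Real.sin θ * (p.2 - x))
        - Real.sin θ * ((-Real.sin θ) * (p.1 - x) + Real.cos θ * (p.2 - x)) := by
      linear_combination (x - p.1) * pyth
    have hc := Real.neg_one_le_cos θ
    have hc' := Real.cos_le_one θ
    have hs := Real.neg_one_le_sin θ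
    have hs' := Real.sin_le_one θ
    constructor <;> nlinarith [h1.1, h1.2, h2.1, h2.2, e]
  have hsub2 : ∀ p : ℝ × ℝ, p ∈ R → p.2 ∈ Icc (x-1) (x+1) := by
    intro p hp
    rw [hRCF] at hp
    obtain ⟨h1, h2⟩ := hp
    rw [abs_le] at h1 h2
    have e : p.2 - x = Real.sin θ * (Real.cos θ * (p.1 - x) + Real.sin θ * (p.2 - x))
        + Real.cos θ * ((-Real.sin θ) * (p.1 - x) + Real.cos θ * (p.2 - x)) := by
      linear_combination (x - p.2) * pyth
    have hc := Real.neg_one_le_cos θ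
    have hc' := Real.cos_le_one θ
    have hs := Real.neg_one_le_sin θ
    have hs' := Real.sin_le_one θ
    constructor <;> nlinarith [h1.1, h1.2, h2.1, h2.2, e]
  -- slice bounds
  obtain ⟨L1, L2, hL1, hL2, hL12, hz, hy⟩ : ∃ L1 L2 : ℝ, 0 ≤ L1 ∧ 0 ≤ L2 ∧ L1 * L2 ≤ 2 * δ ∧
      (∀ y : ℝ, volume {z : ℝ | (y, z) ∈ R} ≤ ENNReal.ofReal L1) ∧
      (∀ z : ℝ, volume {y : ℝ | (y, z) ∈ R} ≤ ENNReal.ofReal L2) := by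
    have hs2 := Real.sq_sqrt (show (0:ℝ) ≤ 2 by norm_num)
    have hsnn := Real.sqrt_nonneg 2
    rcases le_or_gt (1/2) (Real.sin θ ^ 2) with hcase | hcase
    · have hsn : Real.sin θ ≠ 0 := by
        intro h0; rw [h0] at hcase; norm_num at hcase
      refine ⟨2 * (1/2) * Real.sqrt 2, 2 * (δ/2) * Real.sqrt 2, by positivity, by positivity,
        by nlinarith, ?_, ?_⟩
      · intro y
        refine le_trans (measure_mono ?_)
          ((abs_interval_vol (Real.cos θ * (y - x) - Real.sin θ * x) (1/2) hsn).trans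
            (ofReal_div_abs_le (1/2) hcase (by norm_num)))
        intro z hzz
        rw [hRCF] at hzz
        obtain ⟨h1, _⟩ := hzz
        show |(Real.cos θ * (y - x) - Real.sin θ * x) + Real.sin θ * z| ≤ 1/2
        have : (Real.cos θ * (y - x) - Real.sin θ * x) + Real.sin θ * z =
            Real.cos θ * (y - x) + Real.sin θ * (z - x) := by ring
        rw [this]; exact h1
      · intro z
        have hsn' : -Real.sin θ ≠ 0 := by simpa using hsn
        have hsq : 1/2 ≤ (-Real.sin θ) ^ 2 := by rw [neg_pow]; simpa using hcase
        refine le_trans (measure_mono ?_)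
          ((abs_interval_vol (Real.sin θ * x + Real.cos θ * (z - x)) (δ/2) hsn').trans
            (ofReal_div_abs_le (δ/2) hsq (by positivity)))
        intro y hyy
        rw [hRCF] at hyy
        obtain ⟨_, h2⟩ := hyy
        show |(Real.sin θ * x + Real.cos θ * (z - x)) + (-Real.sin θ) * y| ≤ δ/2
        have : (Real.sin θ * x + Real.cos θ * (z - x)) + (-Real.sin θ) * y =
            (-Real.sin θ) * (y - x) + Real.cos θ * (z - x) := by ring
        rw [this]; exact h2
    · have hcos2 : 1/2 ≤ Real.cos θ ^ 2 := by nlinarith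
      have hcn : Real.cos θ ≠ 0 := by
        intro h0; rw [h0] at hcos2; norm_num at hcos2
      refine ⟨2 * (δ/2) * Real.sqrt 2, 2 * (1/2) * Real.sqrt 2, by positivity, by positivity,
        by nlinarith, ?_, ?_⟩
      · intro y
        refine le_trans (measure_mono ?_)
          ((abs_interval_vol ((-Real.sin θ) * (y - x) - Real.cos θ * x) (δ/2) hcn).trans
            (ofReal_div_abs_le (δ/2) hcos2 (by positivity)))
        intro z hzz
        rw [hRCF] at hzz
        obtain ⟨_, h2⟩ := hzz
        show |((-Real.sin θ) * (y - x) - Real.cos θ * x) + Real.cos θ * z| ≤ δ/2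
        have : ((-Real.sin θ) * (y - x) - Real.cos θ * x) + Real.cos θ * z =
            (-Real.sin θ) * (y - x) + Real.cos θ * (z - x) := by ring
        rw [this]; exact h2
      · intro z
        refine le_trans (measure_mono ?_)
          ((abs_interval_vol (Real.sin θ * (z - x) - Real.cos θ * x) (1/2) hcn).trans
            (ofReal_div_abs_le (1/2) hcos2 (by norm_num)))
        intro y hyy
        rw [hRCF] at hyy
        obtain ⟨h1, _⟩ := hyy
        show |(Real.sin θ * (z - x) - Real.cos θ * x) + Real.cos θ * y| ≤ 1/2
        have : (Real.sin θ * (z - x) - Real.cos θ * x) + Real.cos θ * y =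
            Real.cos θ * (y - x) + Real.sin θ * (z - x) := by ring
        rw [this]; exact h1
  -- main chain
  set A : ℝ≥0∞ := ∫⁻ y in Icc (x-1) (x+1), (‖f y‖₊ : ℝ≥0∞) ^ (2:ℝ) with hAdef
  set B : ℝ≥0∞ := ∫⁻ z in Icc (x-1) (x+1), (‖g z‖₊ : ℝ≥0∞) ^ (2:ℝ) with hBdef
  have hfm : Measurable fun y : ℝ => ((‖f y‖₊ : ℝ≥0∞)) ^ (2:ℝ) := by fun_prop
  have hgm : Measurable fun z : ℝ => ((‖g z‖₊ : ℝ≥0∞)) ^ (2:ℝ) := by fun_prop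
  have hJf : ∫⁻ p in R, ((‖f p.1‖₊ : ℝ≥0∞)) ^ (2:ℝ) ≤ ENNReal.ofReal L1 * A :=
    lint_fst R hRm _ hfm _ measurableSet_Icc _ hz hsub1
  have hJg : ∫⁻ p in R, ((‖g p.2‖₊ : ℝ≥0∞)) ^ (2:ℝ) ≤ ENNReal.ofReal L2 * B :=
    lint_snd R hRm _ hgm _ measurableSet_Icc _ hy hsub2
  have hHolder : ∫⁻ p in R, ((‖f p.1 * g p.2‖₊ : ℝ≥0∞)) ≤
      (∫⁻ p in R, ((‖f p.1‖₊ : ℝ≥0∞)) ^ (2:ℝ)) ^ (1/2:ℝ) *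
      (∫⁻ p in R, ((‖g p.2‖₊ : ℝ≥0∞)) ^ (2:ℝ)) ^ (1/2:ℝ) := by
    have hconj : (2:ℝ).HolderConjugate 2 := Real.HolderConjugate.two_two
    have hfa : AEMeasurable (fun p : ℝ × ℝ => ((‖f p.1‖₊ : ℝ≥0∞))) (volume.restrict R) := by
      fun_prop
    have hga : AEMeasurable (fun p : ℝ × ℝ => ((‖g p.2‖₊ : ℝ≥0∞))) (volume.restrict R) := by
      fun_prop
    have := ENNReal.lintegral_mul_le_Lp_mul_Lq (volume.restrict R) hconj hfa hga
    simp only [Pi.mul_apply] at this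
    refine le_trans (le_of_eq ?_) this
    apply lintegral_congr
    intro p
    rw [nnnorm_mul, ENNReal.coe_mul]
  have hIbound : ∫⁻ p in R, ((‖f p.1 * g p.2‖₊ : ℝ≥0∞)) ≤
      ENNReal.ofReal (Real.sqrt (2*δ)) * (A * B) ^ (1/2:ℝ) := by
    refine hHolder.trans ?_
    calc (∫⁻ p in R, ((‖f p.1‖₊ : ℝ≥0∞)) ^ (2:ℝ)) ^ (1/2:ℝ) *
        (∫⁻ p in R, ((‖g p.2‖₊ : ℝ≥0∞)) ^ (2:ℝ)) ^ (1/2:ℝ)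
        ≤ (ENNReal.ofReal L1 * A) ^ (1/2:ℝ) * (ENNReal.ofReal L2 * B) ^ (1/2:ℝ) :=
          mul_le_mul' (ENNReal.rpow_le_rpow hJf (by norm_num))
            (ENNReal.rpow_le_rpow hJg (by norm_num))
      _ = ((ENNReal.ofReal L1 * ENNReal.ofReal L2) * (A * B)) ^ (1/2:ℝ) := by
          rw [← ENNReal.mul_rpow_of_nonneg _ _ (by norm_num : (0:ℝ) ≤ 1/2)]
          ring_nf
      _ ≤ (ENNReal.ofReal (2*δ) * (A * B)) ^ (1/2:ℝ) := by
          apply ENNReal.rpow_le_rpow _ (by norm_num)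
          apply mul_le_mul_left
          rw [← ENNReal.ofReal_mul hL1]
          exact ENNReal.ofReal_le_ofReal hL12
      _ = ENNReal.ofReal (Real.sqrt (2*δ)) * (A * B) ^ (1/2:ℝ) := by
          rw [ENNReal.mul_rpow_of_nonneg _ _ (by norm_num : (0:ℝ) ≤ 1/2),
            ENNReal.ofReal_rpow_of_nonneg (by positivity) (by norm_num),
            ← Real.sqrt_eq_rpow]
  -- divide by volume
  have hsd : 0 < Real.sqrt δ := Real.sqrt_pos.2 hδ0
  have hkey : Real.sqrt (2*δ) / δ = Real.sqrt (2/δ) := by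
    rw [Real.sqrt_mul (by norm_num : (0:ℝ) ≤ 2), Real.sqrt_div (by norm_num : (0:ℝ) ≤ 2),
      div_eq_div_iff hδ0.ne' hsd.ne', mul_assoc, Real.mul_self_sqrt hδ0.le]
  calc avgOn R (fun p => ((‖f p.1 * g p.2‖₊ : ℝ≥0∞))) =
      (∫⁻ p in R, ((‖f p.1 * g p.2‖₊ : ℝ≥0∞))) / ENNReal.ofReal δ := by
        rw [avgOn, hvol]
    _ ≤ (ENNReal.ofReal (Real.sqrt (2*δ)) * (A * B) ^ (1/2:ℝ)) / ENNReal.ofReal δ :=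
        ENNReal.div_le_div_right hIbound _
    _ = (ENNReal.ofReal (Real.sqrt (2*δ)) / ENNReal.ofReal δ) * (A * B) ^ (1/2:ℝ) := by
        rw [mul_comm (ENNReal.ofReal (Real.sqrt (2*δ))) ((A * B) ^ (1/2:ℝ)), mul_div_assoc,
          mul_comm]
    _ = ENNReal.ofReal (Real.sqrt (2/δ)) * (A * B) ^ (1/2:ℝ) := by
        rw [← ENNReal.ofReal_div_of_pos hδ0, hkey]
lemma schwartz_sq_lt_top (f : SchwartzMap ℝ ℂ) :
    ∫⁻ x, ((‖f x‖₊ : ℝ≥0∞)) ^ (2:ℝ) < ⊤ := by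
  have hb : ∀ x : ℝ, ((‖f x‖₊ : ℝ≥0∞)) ^ (2:ℝ) ≤
      ENNReal.ofReal (SchwartzMap.seminorm ℝ 0 0 f) * ‖f x‖₊ := by
    intro x
    rw [show (2:ℝ) = ((2:ℕ):ℝ) by norm_num, ENNReal.rpow_natCast, sq]
    apply mul_le_mul_left
    rw [← enorm_eq_nnnorm, ← ofReal_norm]
    exact ENNReal.ofReal_le_ofReal (SchwartzMap.norm_le_seminorm ℝ f x)
  have hint : (∫⁻ x, ((‖f x‖₊ : ℝ≥0∞))) < ⊤ := (f.integrable (μ := volume)).2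
  calc ∫⁻ x, ((‖f x‖₊ : ℝ≥0∞)) ^ (2:ℝ)
      ≤ ∫⁻ x, ENNReal.ofReal (SchwartzMap.seminorm ℝ 0 0 f) * ‖f x‖₊ := lintegral_mono hb
    _ = ENNReal.ofReal (SchwartzMap.seminorm ℝ 0 0 f) * ∫⁻ x, ((‖f x‖₊ : ℝ≥0∞)) :=
        lintegral_const_mul _ (by fun_prop)
    _ < ⊤ := ENNReal.mul_lt_top ENNReal.ofReal_lt_top hint

/-- Weak-type bound with the trivial dependence on δ (Remark after Theorem 1): the bilinear Kakeya maximal operator `𝔐_δ` maps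
`L²(ℝ) × L²(ℝ)` to `L^{1,∞}(ℝ)` with operator bound `O(δ^{-1/2})`,
uniformly over `δ`-separated sets of directions `Ω`. -/
theorem bilinear_kakeya_weak_type_trivial :
    ∃ C : ℝ, 0 < C ∧
      ∀ δ : ℝ, δ ∈ Set.Ioo (0 : ℝ) 1 →
      ∀ Ω : Set ℝ, (∀ θ ∈ Ω, ∀ θ' ∈ Ω, θ ≠ θ' → δ ≤ |θ - θ'|) →
      ∀ f g : SchwartzMap ℝ ℂ, ∀ lam : ℝ, 0 < lam →
        volume {x : ℝ | ENNReal.ofReal lam ≤ kakeyaMax Ω δ (⇑f) (⇑g) x} ≤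
          ENNReal.ofReal (C / Real.sqrt δ / lam) *
            (eLpNorm (⇑f) 2 volume * eLpNorm (⇑g) 2 volume) := by

  refine ⟨8, by norm_num, ?_⟩
  intro δ hδ Ω hΩsep f g lam hlam
  obtain ⟨hδ0, hδ1⟩ := hδ
  have hfm : Measurable (⇑f) := f.continuous.measurable
  have hgm : Measurable (⇑g) := g.continuous.measurable
  have hfm2 : Measurable fun y : ℝ => ((‖f y‖₊ : ℝ≥0∞)) ^ (2:ℝ) := by fun_prop
  have hgm2 : Measurable fun y : ℝ => ((‖g y‖₊ : ℝ≥0∞)) ^ (2:ℝ) := by fun_prop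
  set hA : ℝ → ℝ≥0∞ := fun x => ∫⁻ y in Icc (x-1) (x+1), ((‖f y‖₊ : ℝ≥0∞)) ^ (2:ℝ) with hAdef
  set hB : ℝ → ℝ≥0∞ := fun x => ∫⁻ y in Icc (x-1) (x+1), ((‖g y‖₊ : ℝ≥0∞)) ^ (2:ℝ) with hBdef
  have hmax : ∀ x : ℝ, kakeyaMax Ω δ (⇑f) (⇑g) x ≤
      ENNReal.ofReal (Real.sqrt (2/δ)) * (hA x * hB x) ^ (1/2:ℝ) :=
    fun x => iSup₂_le fun θ _ => avg_bound hδ0 hδ1.le (⇑f) (⇑g) hfm hgm x θ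
  set m0 : ℝ := lam^2 * δ/2 with hm0def
  have hm0 : 0 < m0 := by positivity
  have hsubE : {x : ℝ | ENNReal.ofReal lam ≤ kakeyaMax Ω δ (⇑f) (⇑g) x} ⊆
      {x : ℝ | ENNReal.ofReal m0 ≤ hA x * hB x} := by
    intro x hx
    rw [mem_setOf_eq] at hx ⊢
    have h1 : ENNReal.ofReal lam ≤ ENNReal.ofReal (Real.sqrt (2/δ)) * (hA x * hB x) ^ (1/2:ℝ) :=
      hx.trans (hmax x)
    have h2 := ENNReal.rpow_le_rpow h1 (show (0:ℝ) ≤ 2 by norm_num)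
    rw [ENNReal.mul_rpow_of_nonneg _ _ (by norm_num : (0:ℝ) ≤ 2), ← ENNReal.rpow_mul,
      show (1/2:ℝ) * 2 = 1 by norm_num, ENNReal.rpow_one,
      ENNReal.ofReal_rpow_of_nonneg (Real.sqrt_nonneg _) (by norm_num),
      ENNReal.ofReal_rpow_of_nonneg hlam.le (by norm_num)] at h2
    have e1 : Real.sqrt (2/δ) ^ (2:ℝ) = 2/δ := by
      rw [show (2:ℝ) = ((2:ℕ):ℝ) by norm_num, Real.rpow_natCast, Real.sq_sqrt (by positivity)]
    have e2 : lam ^ (2:ℝ) = lam^2 := by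
      rw [show (2:ℝ) = ((2:ℕ):ℝ) by norm_num, Real.rpow_natCast]
    rw [e1, e2] at h2
    have h2d : (0:ℝ) < 2/δ := by positivity
    have h3 : ENNReal.ofReal (lam^2) / ENNReal.ofReal (2/δ) ≤ hA x * hB x := by
      rw [ENNReal.div_le_iff_le_mul (Or.inl (by simp [ENNReal.ofReal_eq_zero]; linarith))
        (Or.inl ENNReal.ofReal_ne_top), mul_comm]
      exact h2
    rw [← ENNReal.ofReal_div_of_pos h2d] at h3
    have e3 : lam^2 / (2/δ) = m0 := by rw [hm0def]; field_simp
    rwa [e3] at h3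
  set a : ℝ≥0∞ := ∫⁻ x, ((‖f x‖₊ : ℝ≥0∞)) ^ (2:ℝ) with hadef
  set b : ℝ≥0∞ := ∫⁻ x, ((‖g x‖₊ : ℝ≥0∞)) ^ (2:ℝ) with hbdef
  have haf : a ≠ ⊤ := (schwartz_sq_lt_top f).ne
  have hbf : b ≠ ⊤ := (schwartz_sq_lt_top g).ne
  have hNf : eLpNorm (⇑f) 2 volume = a ^ (1/2:ℝ) := by
    rw [hadef, eLpNorm_eq_lintegral_rpow_enorm_toReal (by norm_num) (by norm_num)]
    norm_num [enorm_eq_nnnorm]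
  have hNg : eLpNorm (⇑g) 2 volume = b ^ (1/2:ℝ) := by
    rw [hbdef, eLpNorm_eq_lintegral_rpow_enorm_toReal (by norm_num) (by norm_num)]
    norm_num [enorm_eq_nnnorm]
  have hAle : ∀ x, hA x ≤ a := fun x => setLIntegral_le_lintegral _ _
  have hBle : ∀ x, hB x ≤ b := fun x => setLIntegral_le_lintegral _ _
  by_cases haz : a = 0
  · have hempty : {x : ℝ | ENNReal.ofReal m0 ≤ hA x * hB x} = ∅ := by
      rw [eq_empty_iff_forall_notMem]
      intro x hx
      rw [mem_setOf_eq] at hx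
      have h0 : hA x = 0 := le_antisymm (haz ▸ hAle x) zero_le
      rw [h0, zero_mul, le_zero_iff, ENNReal.ofReal_eq_zero] at hx
      linarith
    refine le_trans (measure_mono hsubE) ?_
    rw [hempty, measure_empty]
    exact zero_le
  by_cases hbz : b = 0
  · have hempty : {x : ℝ | ENNReal.ofReal m0 ≤ hA x * hB x} = ∅ := by
      rw [eq_empty_iff_forall_notMem]
      intro x hx
      rw [mem_setOf_eq] at hx
      have h0 : hB x = 0 := le_antisymm (hbz ▸ hBle x) zero_le
      rw [h0, mul_zero, le_zero_iff, ENNReal.ofReal_eq_zero] at hx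
      linarith
    refine le_trans (measure_mono hsubE) ?_
    rw [hempty, measure_empty]
    exact zero_le
  -- nondegenerate case
  set nf : ℝ := (eLpNorm (⇑f) 2 volume).toReal with hnfdef
  set ng : ℝ := (eLpNorm (⇑g) 2 volume).toReal with hngdef
  have hNftop : eLpNorm (⇑f) 2 volume ≠ ⊤ := by
    rw [hNf]; exact ENNReal.rpow_ne_top_of_nonneg (by norm_num) haf
  have hNgtop : eLpNorm (⇑g) 2 volume ≠ ⊤ := by
    rw [hNg]; exact ENNReal.rpow_ne_top_of_nonneg (by norm_num) hbf
  have hNf0 : eLpNorm (⇑f) 2 volume ≠ 0 := by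
    rw [hNf]
    intro hcon
    rcases ENNReal.rpow_eq_zero_iff.mp hcon with ⟨h1, _⟩ | ⟨_, h2⟩
    · exact haz h1
    · norm_num at h2
  have hNg0 : eLpNorm (⇑g) 2 volume ≠ 0 := by
    rw [hNg]
    intro hcon
    rcases ENNReal.rpow_eq_zero_iff.mp hcon with ⟨h1, _⟩ | ⟨_, h2⟩
    · exact hbz h1
    · norm_num at h2
  have hnf0 : 0 < nf := ENNReal.toReal_pos hNf0 hNftop
  have hng0 : 0 < ng := ENNReal.toReal_pos hNg0 hNgtop
  have hfeq : eLpNorm (⇑f) 2 volume = ENNReal.ofReal nf := (ENNReal.ofReal_toReal hNftop).symm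
  have hgeq : eLpNorm (⇑g) 2 volume = ENNReal.ofReal ng := (ENNReal.ofReal_toReal hNgtop).symm
  have haeq : a = ENNReal.ofReal (nf^2) := by
    have h1 : a = (a ^ (1/2:ℝ)) ^ (2:ℝ) := by
      rw [← ENNReal.rpow_mul, show (1/2:ℝ) * 2 = 1 by norm_num, ENNReal.rpow_one]
    rw [h1, ← hNf, hfeq, ENNReal.ofReal_rpow_of_nonneg hnf0.le (by norm_num),
      show (2:ℝ) = ((2:ℕ):ℝ) by norm_num, Real.rpow_natCast]
  have hbeq : b = ENNReal.ofReal (ng^2) := by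
    have h1 : b = (b ^ (1/2:ℝ)) ^ (2:ℝ) := by
      rw [← ENNReal.rpow_mul, show (1/2:ℝ) * 2 = 1 by norm_num, ENNReal.rpow_one]
    rw [h1, ← hNg, hgeq, ENNReal.ofReal_rpow_of_nonneg hng0.le (by norm_num),
      show (2:ℝ) = ((2:ℕ):ℝ) by norm_num, Real.rpow_natCast]
  have hsm0 : 0 < Real.sqrt m0 := Real.sqrt_pos.2 hm0
  set s1 : ℝ≥0∞ := ENNReal.ofReal (nf * Real.sqrt m0 / ng) with hs1def
  set s2 : ℝ≥0∞ := ENNReal.ofReal (Real.sqrt m0 * ng / nf) with hs2def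
  have hs1pos : (0:ℝ) < nf * Real.sqrt m0 / ng := by positivity
  have hs2pos : (0:ℝ) < Real.sqrt m0 * ng / nf := by positivity
  have hsplit : {x : ℝ | ENNReal.ofReal m0 ≤ hA x * hB x} ⊆
      {x : ℝ | s1 ≤ hA x} ∪ {x : ℝ | s2 ≤ hB x} := by
    intro x hx
    rw [mem_setOf_eq] at hx
    by_contra hcon
    rw [mem_union] at hcon
    push_neg at hcon
    obtain ⟨h1, h2⟩ := hcon
    rw [mem_setOf_eq, not_le] at h1 h2
    have hlt : hA x * hB x < s1 * s2 := ENNReal.mul_lt_mul h1 h2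
    have hs1s2 : s1 * s2 = ENNReal.ofReal m0 := by
      rw [hs1def, hs2def, ← ENNReal.ofReal_mul hs1pos.le]
      congr 1
      have hmm := Real.mul_self_sqrt hm0.le
      field_simp
      linear_combination hmm
    rw [hs1s2] at hlt
    exact lt_irrefl _ (lt_of_le_of_lt hx hlt)
  have hm1 : volume {x : ℝ | s1 ≤ hA x} ≤ ENNReal.ofReal (2*nf*ng/Real.sqrt m0) := by
    refine (meas_ge_le_lintegral_div (band_measurable _ hfm2).aemeasurable
      (by simp [hs1def, ENNReal.ofReal_eq_zero]; linarith) ENNReal.ofReal_ne_top).trans ?_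
    refine le_trans (ENNReal.div_le_div_right (band_lintegral _ hfm2) s1) ?_
    rw [← hadef, haeq, hs1def, show (2:ℝ≥0∞) = ENNReal.ofReal 2 by norm_num,
      ← ENNReal.ofReal_mul (by norm_num), ← ENNReal.ofReal_div_of_pos hs1pos]
    apply ENNReal.ofReal_le_ofReal
    apply le_of_eq
    field_simp
  have hm2 : volume {x : ℝ | s2 ≤ hB x} ≤ ENNReal.ofReal (2*nf*ng/Real.sqrt m0) := by
    refine (meas_ge_le_lintegral_div (band_measurable _ hgm2).aemeasurable
      (by simp [hs2def, ENNReal.ofReal_eq_zero]; linarith) ENNReal.ofReal_ne_top).trans ?_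
    refine le_trans (ENNReal.div_le_div_right (band_lintegral _ hgm2) s2) ?_
    rw [← hbdef, hbeq, hs2def, show (2:ℝ≥0∞) = ENNReal.ofReal 2 by norm_num,
      ← ENNReal.ofReal_mul (by norm_num), ← ENNReal.ofReal_div_of_pos hs2pos]
    apply ENNReal.ofReal_le_ofReal
    apply le_of_eq
    field_simp
  calc volume {x : ℝ | ENNReal.ofReal lam ≤ kakeyaMax Ω δ (⇑f) (⇑g) x}
      ≤ volume ({x : ℝ | s1 ≤ hA x} ∪ {x : ℝ | s2 ≤ hB x}) :=
        measure_mono (hsubE.trans hsplit)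
    _ ≤ volume {x : ℝ | s1 ≤ hA x} + volume {x : ℝ | s2 ≤ hB x} := measure_union_le _ _
    _ ≤ ENNReal.ofReal (2*nf*ng/Real.sqrt m0) + ENNReal.ofReal (2*nf*ng/Real.sqrt m0) :=
        add_le_add hm1 hm2
    _ = ENNReal.ofReal (4*nf*ng/Real.sqrt m0) := by
        rw [← ENNReal.ofReal_add (by positivity) (by positivity)]
        congr 1
        ring
    _ ≤ ENNReal.ofReal (8 / Real.sqrt δ / lam) *
        (eLpNorm (⇑f) 2 volume * eLpNorm (⇑g) 2 volume) := by
        rw [hfeq, hgeq, ← ENNReal.ofReal_mul hnf0.le, ← ENNReal.ofReal_mul (by positivity)]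
        apply ENNReal.ofReal_le_ofReal
        have hsd : 0 < Real.sqrt δ := Real.sqrt_pos.2 hδ0
        have h1 : lam * Real.sqrt δ / 2 ≤ Real.sqrt m0 := by
          rw [show Real.sqrt m0 = Real.sqrt (lam^2*δ/2) from rfl,
            ← Real.sqrt_sq (show (0:ℝ) ≤ lam * Real.sqrt δ / 2 by positivity)]
          apply Real.sqrt_le_sqrt
          nlinarith [Real.sq_sqrt hδ0.le, hlam, hsd]
        have h2 : 4/Real.sqrt m0 ≤ 8/(lam * Real.sqrt δ) := by
          rw [div_le_div_iff₀ hsm0 (by positivity)]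
          nlinarith [h1, hsm0]
        calc 4*nf*ng/Real.sqrt m0 = (4/Real.sqrt m0) * (nf*ng) := by ring
          _ ≤ (8/(lam * Real.sqrt δ)) * (nf*ng) :=
              mul_le_mul_of_nonneg_right h2 (by positivity)
          _ = 8 / Real.sqrt δ / lam * (nf*ng) := by rw [div_div]; ring_nf
end
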